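/- Let T be a (p,q)-banded matrix with nonvanishing extreme diagonals, A^{(a)}_n the left recursion polynomials, and Q_{n,N} the associated determinantal polynomials. Then for all n, N ∈ ℕ, the identity ∑_{m = max(0, n−q)}^{n+p} Q_{m,N} · T m n = x · Q_{n,N} holds in ℝ[x]; that is, the semi-infinite row vector (Q_{0,N}, Q_{1,N}, …) is a formal left eigenvector of T with eigenvalue x. -/

import Mathlib

theorem det_updateRow_sum' {n R : Type*} [DecidableEq n] [Fintype n] [CommRing R]
    {ι : Type*} (s : Finset ι) (M : Matrix n n R) (j : n) (u : ι → n → R) :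
    (M.updateRow j (∑ i ∈ s, u i)).det = ∑ i ∈ s, (M.updateRow j (u i)).det := by
  classical
  induction s using Finset.induction_on with
  | empty =>
      simp only [Finset.sum_empty]
      exact Matrix.det_eq_zero_of_row_eq_zero j (by simp)
  | insert _ _ h ih =>
      rw [Finset.sum_insert h, Finset.sum_insert h, Matrix.det_updateRow_add, ih]

/-- The determinantal polynomials `Q_{n,N}` satisfy the same left recursion as the left
recursion polynomials: the semi-infinite row vector `(Q_{0,N}, Q_{1,N}, …)` is a formal
left eigenvector of the banded matrix `T` with eigenvalue `x`. -/
theorem determinantal_polynomials_Q_left_eigenvector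
    (p q : ℕ) (hp : 1 ≤ p) (hq : 1 ≤ q)
    (T : ℕ → ℕ → ℝ)
    (hband : ∀ i j, (j + p < i ∨ i + q < j) → T i j = 0)
    (hext : ∀ n, T (n + p) n ≠ 0 ∧ T n (n + q) ≠ 0)
    (ν : ℕ → ℕ → ℝ) (A : ℕ → ℕ → Polynomial ℝ)
    (hA0 : ∀ a, 1 ≤ a → a ≤ p → ∀ n, n < a - 1 → A a n = 0)
    (hA1 : ∀ a, 1 ≤ a → a ≤ p → A a (a - 1) = 1)
    (hAconst : ∀ a, 1 ≤ a → a ≤ p → ∀ j, a ≤ j → j ≤ p - 1 → A a j = Polynomial.C (ν a j))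
    (hArec : ∀ a, 1 ≤ a → a ≤ p → ∀ n,
      ∑ m ∈ Finset.Icc (n - q) (n + p), A a m * Polynomial.C (T m n)
        = Polynomial.X * A a n)
    (Q : ℕ → ℕ → Polynomial ℝ)
    (hQ : ∀ n N, Q n N = (Matrix.of fun i a : Fin p =>
        if (i : ℕ) = 0 then A ((a : ℕ) + 1) n else A ((a : ℕ) + 1) (N + (i : ℕ))).det) :
    ∀ n N : ℕ,
      ∑ m ∈ Finset.Icc (n - q) (n + p), Q m N * Polynomial.C (T m n)
        = Polynomial.X * Q n N := by
  intro n N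
  set i0 : Fin p := ⟨0, hp⟩ with hi0
  set M : Matrix (Fin p) (Fin p) (Polynomial ℝ) := Matrix.of fun i a : Fin p =>
      if (i : ℕ) = 0 then A ((a : ℕ) + 1) n else A ((a : ℕ) + 1) (N + (i : ℕ)) with hM
  have hrow : ∀ m : ℕ, (Matrix.of fun i a : Fin p =>
      if (i : ℕ) = 0 then A ((a : ℕ) + 1) m else A ((a : ℕ) + 1) (N + (i : ℕ)))
      = M.updateRow i0 (fun a => A ((a : ℕ) + 1) m) := by
    intro m
    funext i a
    rw [Matrix.updateRow_apply]
    by_cases h : i = i0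
    · simp [h, hi0, hM]
    · have h0 : (i : ℕ) ≠ 0 := by
        intro hc
        exact h (Fin.ext hc)
      simp [h, h0, hM]
  have hself : M.updateRow i0 (fun a => A ((a : ℕ) + 1) n) = M := by
    funext i a
    rw [Matrix.updateRow_apply]
    by_cases h : i = i0
    · simp [h, hi0, hM]
    · simp [h]
  calc ∑ m ∈ Finset.Icc (n - q) (n + p), Q m N * Polynomial.C (T m n)
      = ∑ m ∈ Finset.Icc (n - q) (n + p),
          (M.updateRow i0 (fun a => A ((a : ℕ) + 1) m * Polynomial.C (T m n))).det := by
        refine Finset.sum_congr rfl fun m _ => ?_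
        rw [hQ m N, hrow m, mul_comm]
        have heq : (fun a : Fin p => A ((a : ℕ) + 1) m * Polynomial.C (T m n))
            = Polynomial.C (T m n) • (fun a : Fin p => A ((a : ℕ) + 1) m) := by
          funext a; simp [mul_comm]
        rw [heq, Matrix.det_updateRow_smul]
    _ = (M.updateRow i0 (∑ m ∈ Finset.Icc (n - q) (n + p),
          fun a : Fin p => A ((a : ℕ) + 1) m * Polynomial.C (T m n))).det :=
        (det_updateRow_sum' _ M i0 _).symm
    _ = (M.updateRow i0 (fun a : Fin p => Polynomial.X * A ((a : ℕ) + 1) n)).det := by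
        have hsum : (∑ m ∈ Finset.Icc (n - q) (n + p),
            fun a : Fin p => A ((a : ℕ) + 1) m * Polynomial.C (T m n))
            = fun a : Fin p => Polynomial.X * A ((a : ℕ) + 1) n := by
          funext a
          rw [Finset.sum_apply]
          exact hArec ((a : ℕ) + 1) (Nat.succ_le_succ (Nat.zero_le _))
            (Nat.succ_le_of_lt a.isLt) n
        rw [hsum]
    _ = Polynomial.X * Q n N := by
        have : (fun a : Fin p => Polynomial.X * A ((a : ℕ) + 1) n)
            = (Polynomial.X : Polynomial ℝ) • (fun a : Fin p => A ((a : ℕ) + 1) n) := by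
          funext a; simp
        rw [this, Matrix.det_updateRow_smul, hself, hQ n N]
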